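/- (Completeness of the m.p. scheme.) Let h be a multivalued refinement of a Boolean model f, and suppose there is an asynchronous trajectory from x to y in the dynamics of h. Then for any m.p. state x̂ compatible with x there is a trajectory in the m.p. dynamics of f from x̂ to some m.p. state ŷ compatible with y. -/
import Mathlib


/-- Activity levels of the most permissive scheme: 0, 1, increasing, decreasing. -/
inductive MPLevel : Type
  | zero | one | inc | dec
deriving DecidableEq

/-- The set γ(x̂) of Boolean states compatible with an m.p. state x̂. -/
def mpGamma {n : ℕ} (x : Fin n → MPLevel) : Set (Fin n → Bool) :=
  {x' | ∀ j, (x j = MPLevel.zero → x' j = false) ∧ (x j = MPLevel.one → x' j = true)}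

/-- The set α(x) of Boolean states compatible with a multivalued state x. -/
def mvAlpha {n : ℕ} (m x : Fin n → ℕ) : Set (Fin n → Bool) :=
  {x' | ∀ j, (x j = 0 → x' j = false) ∧ (x j = m j → x' j = true)}

/-- Coordinatewise embedding of Boolean states into m.p. states. -/
def embBM {n : ℕ} (x : Fin n → Bool) : Fin n → MPLevel :=
  fun j => if x j then MPLevel.one else MPLevel.zero

/-- Embedding of a Boolean state into X = ∏ {0,…,m_j}, sending 1 to m_j. -/
def embX {n : ℕ} (m : Fin n → ℕ) (x : Fin n → Bool) : Fin n → ℕ :=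
  fun j => if x j then m j else 0

/-- Transition of the most permissive dynamics of f at coordinate j0. -/
def mpTransAt {n : ℕ} (f : (Fin n → Bool) → Fin n → Bool) (j0 : Fin n)
    (x y : Fin n → MPLevel) : Prop :=
  (∀ j, j ≠ j0 → y j = x j) ∧
    (((x j0 = MPLevel.zero ∨ x j0 = MPLevel.dec) ∧ (∃ x' ∈ mpGamma x, f x' j0 = true) ∧ y j0 = MPLevel.inc) ∨
     ((x j0 = MPLevel.one ∨ x j0 = MPLevel.inc) ∧ (∃ x' ∈ mpGamma x, f x' j0 = false) ∧ y j0 = MPLevel.dec) ∨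
     (x j0 = MPLevel.inc ∧ y j0 = MPLevel.one) ∨
     (x j0 = MPLevel.dec ∧ y j0 = MPLevel.zero))

/-- Transition of the most permissive dynamics of f. -/
def mpTrans {n : ℕ} (f : (Fin n → Bool) → Fin n → Bool) (x y : Fin n → MPLevel) : Prop :=
  ∃ j0, mpTransAt f j0 x y

/-- Transition of the partial J-most-permissive dynamics of f at coordinate j0. -/
def pmpTransAt {n : ℕ} (J : Set (Fin n)) (f : (Fin n → Bool) → Fin n → Bool) (j0 : Fin n)
    (x y : Fin n → MPLevel) : Prop :=
  (∀ j, j ≠ j0 → y j = x j) ∧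
    (((x j0 = MPLevel.zero ∨ x j0 = MPLevel.dec) ∧ (∃ x' ∈ mpGamma x, f x' j0 = true) ∧ y j0 = MPLevel.inc) ∨
     ((x j0 = MPLevel.one ∨ x j0 = MPLevel.inc) ∧ (∃ x' ∈ mpGamma x, f x' j0 = false) ∧ y j0 = MPLevel.dec) ∨
     (x j0 = MPLevel.inc ∧ y j0 = MPLevel.one) ∨
     (x j0 = MPLevel.dec ∧ y j0 = MPLevel.zero) ∨
     (j0 ∉ J ∧ x j0 = MPLevel.zero ∧ (∃ x' ∈ mpGamma x, f x' j0 = true) ∧ y j0 = MPLevel.one) ∨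
     (j0 ∉ J ∧ x j0 = MPLevel.one ∧ (∃ x' ∈ mpGamma x, f x' j0 = false) ∧ y j0 = MPLevel.zero))

/-- Transition of the partial J-most-permissive dynamics of f. -/
def pmpTrans {n : ℕ} (J : Set (Fin n)) (f : (Fin n → Bool) → Fin n → Bool)
    (x y : Fin n → MPLevel) : Prop :=
  ∃ j0, pmpTransAt J f j0 x y

/-- A state of X_{J m.p.}: coordinates outside J are Boolean. -/
def inXJ {n : ℕ} (J : Set (Fin n)) (x : Fin n → MPLevel) : Prop :=
  ∀ j, j ∉ J → (x j = MPLevel.zero ∨ x j = MPLevel.one)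

/-- Asynchronous transition of a Boolean model f. -/
def asyncTransB {n : ℕ} (f : (Fin n → Bool) → Fin n → Bool) (x y : Fin n → Bool) : Prop :=
  ∃ j0, f x j0 ≠ x j0 ∧ y j0 = f x j0 ∧ ∀ j, j ≠ j0 → y j = x j

/-- Asynchronous transition of a multivalued model h (one coordinate moves by 1 toward its target). -/
def asyncTrans {n : ℕ} (h : (Fin n → ℕ) → Fin n → ℕ) (x y : Fin n → ℕ) : Prop :=
  ∃ j0, h x j0 ≠ x j0 ∧ (∀ j, j ≠ j0 → y j = x j) ∧
    ((x j0 < h x j0 ∧ y j0 = x j0 + 1) ∨ (h x j0 < x j0 ∧ y j0 = x j0 - 1))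

/-- An m.p. state x̂ is compatible with a multivalued state x. -/
def mpCompat {n : ℕ} (m x : Fin n → ℕ) (xh : Fin n → MPLevel) : Prop :=
  ∀ j, (x j = 0 → xh j = MPLevel.zero) ∧ (x j = m j → xh j = MPLevel.one) ∧
    (0 < x j → x j < m j → (xh j = MPLevel.inc ∨ xh j = MPLevel.dec))

/-- h is a multivalued model on X = ∏ {0,…,m_j}: maps X to X, moving each coordinate by at most 1. -/
def isMVModel {n : ℕ} (m : Fin n → ℕ) (h : (Fin n → ℕ) → Fin n → ℕ) : Prop :=
  ∀ x, (∀ j, x j ≤ m j) → ∀ j, h x j ≤ m j ∧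
    (h x j = x j ∨ h x j = x j + 1 ∨ h x j + 1 = x j)

/-- h is a multivalued refinement of the Boolean model f. -/
def isRefinement {n : ℕ} (m : Fin n → ℕ) (f : (Fin n → Bool) → Fin n → Bool)
    (h : (Fin n → ℕ) → Fin n → ℕ) : Prop :=
  ∀ x, (∀ j, x j ≤ m j) → ∀ j,
    (h x j < x j → ∃ x' ∈ mvAlpha m x, f x' j = false ∧ x' j = true) ∧
    (x j < h x j → ∃ x' ∈ mvAlpha m x, f x' j = true ∧ x' j = false)

/-- A literal in a DNF: a regulator index, a polarity, and a threshold (used in the multivalued reading). -/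
structure Lit (n : ℕ) where
  idx : Fin n
  pos : Bool
  thr : ℕ

/-- Boolean evaluation of a literal (threshold ignored). -/
def evalLitB {n : ℕ} (x : Fin n → Bool) (l : Lit n) : Bool :=
  if l.pos then x l.idx else !(x l.idx)

/-- Multivalued evaluation of a literal: x_idx ≥ thr+1 for a positive literal, x_idx < thr+1 otherwise. -/
def evalLitM {n : ℕ} (x : Fin n → ℕ) (l : Lit n) : Bool :=
  if l.pos then decide (l.thr + 1 ≤ x l.idx) else decide (x l.idx < l.thr + 1)

/-- Boolean evaluation of a DNF (list of conjunctive clauses). -/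
def evalDNFB {n : ℕ} (x : Fin n → Bool) (φ : List (List (Lit n))) : Bool :=
  φ.any fun c => c.all (evalLitB x)

/-- Multivalued evaluation of a DNF via the thresholds. -/
def evalDNFM {n : ℕ} (x : Fin n → ℕ) (φ : List (List (Lit n))) : Bool :=
  φ.any fun c => c.all (evalLitM x)

/-- Refinement built from the DNF threshold parameterisation:
h_j(x) = max(0, min(m_j, x_j + H_j(x))) with H_j(x) = +1 iff the multivalued DNF of f_j is true. -/
def hDNF {n : ℕ} (m : Fin n → ℕ) (φ : Fin n → List (List (Lit n)))
    (x : Fin n → ℕ) : Fin n → ℕ :=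
  fun j => if evalDNFM x (φ j) then min (m j) (x j + 1) else x j - 1

section Aux

open MPLevel

lemma compat_sub {n : ℕ} {m x : Fin n → ℕ} {xh : Fin n → MPLevel}
    (hx : ∀ j, x j ≤ m j) (hc : mpCompat m x xh) :
    mvAlpha m x ⊆ mpGamma xh := by
  intro x' hx' j
  rcases hc j with ⟨h0, h1, hmid⟩
  constructor
  · intro hz
    rcases Nat.eq_zero_or_pos (x j) with hxe | hpos
    · exact (hx' j).1 hxe
    · rcases lt_or_eq_of_le (hx j) with hlt | heq
      · rcases hmid hpos hlt with h' | h' <;> rw [h'] at hz <;> exact absurd hz (by simp)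
      · rw [h1 heq] at hz; exact absurd hz (by simp)
  · intro ho
    rcases Nat.eq_zero_or_pos (x j) with hxe | hpos
    · rw [h0 hxe] at ho; exact absurd ho (by simp)
    · rcases lt_or_eq_of_le (hx j) with hlt | heq
      · rcases hmid hpos hlt with h' | h' <;> rw [h'] at ho <;> exact absurd ho (by simp)
      · exact (hx' j).2 heq

lemma compat_update {n : ℕ} {m x y : Fin n → ℕ} {xh : Fin n → MPLevel} {j0 : Fin n}
    {L : MPLevel} (hc : mpCompat m x xh) (hoff : ∀ j, j ≠ j0 → y j = x j)
    (h0 : y j0 = 0 → L = MPLevel.zero) (h1 : y j0 = m j0 → L = MPLevel.one)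
    (hmd : 0 < y j0 → y j0 < m j0 → L = MPLevel.inc ∨ L = MPLevel.dec) :
    mpCompat m y (Function.update xh j0 L) := by
  intro j
  by_cases hj : j = j0
  · subst hj
    simpa [Function.update_self] using ⟨h0, h1, hmd⟩
  · rw [Function.update_of_ne hj, hoff j hj]
    exact hc j

lemma mpTrans_update {n : ℕ} (f : (Fin n → Bool) → Fin n → Bool) (j0 : Fin n)
    (xh : Fin n → MPLevel) (L : MPLevel)
    (hd : ((xh j0 = MPLevel.zero ∨ xh j0 = MPLevel.dec) ∧ (∃ x' ∈ mpGamma xh, f x' j0 = true) ∧ L = MPLevel.inc) ∨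
     ((xh j0 = MPLevel.one ∨ xh j0 = MPLevel.inc) ∧ (∃ x' ∈ mpGamma xh, f x' j0 = false) ∧ L = MPLevel.dec) ∨
     (xh j0 = MPLevel.inc ∧ L = MPLevel.one) ∨
     (xh j0 = MPLevel.dec ∧ L = MPLevel.zero)) :
    mpTrans f xh (Function.update xh j0 L) :=
  ⟨j0, fun j hj => Function.update_of_ne hj _ _, by simpa [Function.update_self] using hd⟩

lemma async_preserves {n : ℕ} {m : Fin n → ℕ} {h : (Fin n → ℕ) → Fin n → ℕ}
    (hmv : isMVModel m h) {x y : Fin n → ℕ} (hx : ∀ j, x j ≤ m j)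
    (hstep : asyncTrans h x y) : ∀ j, y j ≤ m j := by
  obtain ⟨j0, hne, hoff, hcase⟩ := hstep
  intro j
  by_cases hj : j = j0
  · subst hj
    have hhle := (hmv x hx j).1
    have hxle := hx j
    rcases hcase with ⟨hlt, hy0⟩ | ⟨hlt, hy0⟩ <;> omega
  · rw [hoff j hj]; exact hx j

lemma mp_step {n : ℕ} {f : (Fin n → Bool) → Fin n → Bool} {m : Fin n → ℕ}
    (hm : ∀ j, 1 ≤ m j) {h : (Fin n → ℕ) → Fin n → ℕ}
    (hmv : isMVModel m h) (href : isRefinement m f h)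
    {x y : Fin n → ℕ} (hx : ∀ j, x j ≤ m j) (hstep : asyncTrans h x y)
    {xh : Fin n → MPLevel} (hc : mpCompat m x xh) :
    ∃ yh, mpCompat m y yh ∧ Relation.ReflTransGen (mpTrans f) xh yh := by
  obtain ⟨j0, hne, hoff, hcase⟩ := hstep
  have hhle := (hmv x hx j0).1
  have hxle := hx j0
  have hm0 := hm j0
  rcases hcase with ⟨hlt, hy0⟩ | ⟨hlt, hy0⟩
  · -- increasing step
    obtain ⟨x', hx'α, hfx', -⟩ := (href x hx j0).2 hlt
    have hγ : x' ∈ mpGamma xh := compat_sub hx hc hx'α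
    have hxlt : x j0 < m j0 := lt_of_lt_of_le hlt hhle
    have hy0pos : 0 < y j0 := by omega
    have hcases : xh j0 = zero ∨ xh j0 = inc ∨ xh j0 = dec := by
      rcases Nat.eq_zero_or_pos (x j0) with hxe | hpos
      · exact Or.inl ((hc j0).1 hxe)
      · exact Or.inr ((hc j0).2.2 hpos hxlt)
    have hyle : y j0 ≤ m j0 := by omega
    rcases lt_or_eq_of_le hyle with hylt | hyeq
    · -- target is inc
      have hcompat : mpCompat m y (Function.update xh j0 inc) :=
        compat_update hc hoff (fun hz => absurd hz (by omega))
          (fun ho => absurd ho (by omega)) (fun _ _ => Or.inl rfl)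
      rcases hcases with h' | h' | h'
      · exact ⟨_, hcompat, Relation.ReflTransGen.single
          (mpTrans_update f j0 xh inc (Or.inl ⟨Or.inl h', ⟨x', hγ, hfx'⟩, rfl⟩))⟩
      · refine ⟨xh, ?_, Relation.ReflTransGen.refl⟩
        rw [← h', Function.update_eq_self] at hcompat; exact hcompat
      · exact ⟨_, hcompat, Relation.ReflTransGen.single
          (mpTrans_update f j0 xh inc (Or.inl ⟨Or.inr h', ⟨x', hγ, hfx'⟩, rfl⟩))⟩
    · -- target is one
      have hcompat : mpCompat m y (Function.update xh j0 one) :=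
        compat_update hc hoff (fun hz => absurd hz (by omega))
          (fun _ => rfl) (fun _ hlt' => absurd hyeq (by omega))
      have t2 : mpTrans f (Function.update xh j0 inc) (Function.update xh j0 one) := by
        have := mpTrans_update f j0 (Function.update xh j0 inc) one
          (Or.inr (Or.inr (Or.inl ⟨Function.update_self _ _ _, rfl⟩)))
        rwa [Function.update_idem] at this
      rcases hcases with h' | h' | h'
      · exact ⟨_, hcompat, Relation.ReflTransGen.head
          (mpTrans_update f j0 xh inc (Or.inl ⟨Or.inl h', ⟨x', hγ, hfx'⟩, rfl⟩))
          (Relation.ReflTransGen.single t2)⟩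
      · exact ⟨_, hcompat, Relation.ReflTransGen.single
          (mpTrans_update f j0 xh one (Or.inr (Or.inr (Or.inl ⟨h', rfl⟩))))⟩
      · exact ⟨_, hcompat, Relation.ReflTransGen.head
          (mpTrans_update f j0 xh inc (Or.inl ⟨Or.inr h', ⟨x', hγ, hfx'⟩, rfl⟩))
          (Relation.ReflTransGen.single t2)⟩
  · -- decreasing step
    obtain ⟨x', hx'α, hfx', -⟩ := (href x hx j0).1 hlt
    have hγ : x' ∈ mpGamma xh := compat_sub hx hc hx'α
    have hxpos : 0 < x j0 := by omega
    have hcases : xh j0 = one ∨ xh j0 = inc ∨ xh j0 = dec := by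
      rcases lt_or_eq_of_le hxle with hxlt | hxeq
      · exact Or.inr ((hc j0).2.2 hxpos hxlt)
      · exact Or.inl ((hc j0).2.1 hxeq)
    have hylt : y j0 < m j0 := by omega
    rcases Nat.eq_zero_or_pos (y j0) with hye | hyp
    · -- target is zero
      have hcompat : mpCompat m y (Function.update xh j0 zero) :=
        compat_update hc hoff (fun _ => rfl)
          (fun ho => absurd ho (by omega)) (fun hp _ => absurd hye (by omega))
      have t2 : mpTrans f (Function.update xh j0 dec) (Function.update xh j0 zero) := by
        have := mpTrans_update f j0 (Function.update xh j0 dec) zero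
          (Or.inr (Or.inr (Or.inr ⟨Function.update_self _ _ _, rfl⟩)))
        rwa [Function.update_idem] at this
      rcases hcases with h' | h' | h'
      · exact ⟨_, hcompat, Relation.ReflTransGen.head
          (mpTrans_update f j0 xh dec (Or.inr (Or.inl ⟨Or.inl h', ⟨x', hγ, hfx'⟩, rfl⟩)))
          (Relation.ReflTransGen.single t2)⟩
      · exact ⟨_, hcompat, Relation.ReflTransGen.head
          (mpTrans_update f j0 xh dec (Or.inr (Or.inl ⟨Or.inr h', ⟨x', hγ, hfx'⟩, rfl⟩)))
          (Relation.ReflTransGen.single t2)⟩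
      · exact ⟨_, hcompat, Relation.ReflTransGen.single
          (mpTrans_update f j0 xh zero (Or.inr (Or.inr (Or.inr ⟨h', rfl⟩))))⟩
    · -- target is dec
      have hcompat : mpCompat m y (Function.update xh j0 dec) :=
        compat_update hc hoff (fun hz => absurd hz (by omega))
          (fun ho => absurd ho (by omega)) (fun _ _ => Or.inr rfl)
      rcases hcases with h' | h' | h'
      · exact ⟨_, hcompat, Relation.ReflTransGen.single
          (mpTrans_update f j0 xh dec (Or.inr (Or.inl ⟨Or.inl h', ⟨x', hγ, hfx'⟩, rfl⟩)))⟩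
      · exact ⟨_, hcompat, Relation.ReflTransGen.single
          (mpTrans_update f j0 xh dec (Or.inr (Or.inl ⟨Or.inr h', ⟨x', hγ, hfx'⟩, rfl⟩)))⟩
      · refine ⟨xh, ?_, Relation.ReflTransGen.refl⟩
        rw [← h', Function.update_eq_self] at hcompat; exact hcompat

end Aux

/-- completeness of the m.p. scheme: if there is an asynchronous trajectory
from x to y in a refinement h of f, then from any m.p. state x̂ compatible with x there is a
trajectory in the m.p. dynamics of f to some state ŷ compatible with y. -/
theorem mp_completeness {n : ℕ} (f : (Fin n → Bool) → Fin n → Bool)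
    (m : Fin n → ℕ) (hm : ∀ j, 1 ≤ m j) (hex : ∃ j, 1 < m j)
    (h : (Fin n → ℕ) → Fin n → ℕ) (hmv : isMVModel m h) (href : isRefinement m f h)
    (x y : Fin n → ℕ) (hx : ∀ j, x j ≤ m j)
    (ht : Relation.ReflTransGen (asyncTrans h) x y)
    (xh : Fin n → MPLevel) (hc : mpCompat m x xh) :
    ∃ yh : Fin n → MPLevel, mpCompat m y yh ∧
      Relation.ReflTransGen (mpTrans f) xh yh := by
  clear hex
  revert hx xh hc
  induction ht using Relation.ReflTransGen.head_induction_on with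
  | refl => intro hx xh hc; exact ⟨xh, hc, Relation.ReflTransGen.refl⟩
  | head hab htail ih =>
    intro hx xh hc
    obtain ⟨zh, hcz, htr⟩ := mp_step hm hmv href hx hab hc
    obtain ⟨yh, hcy, htr'⟩ := ih (async_preserves hmv hx hab) zh hcz
    exact ⟨yh, hcy, htr.trans htr'⟩
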